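/- Let R be a strictly positive real random variable with E[R] = 1, E[|log R|] < ∞, E[(R − 1)²] < ∞ and E[(R − 1)² |log R|] < ∞. Then |E[log R] + E[(R − 1)²]/2| ≤ E[(R − 1)² |log R|]. -/

import Mathlib

open MeasureTheory

lemma hasDerivAt_f {x : ℝ} (hx : 0 < x) :
    HasDerivAt (fun y => Real.log y - (y - 1) + (y - 1) ^ 2 / 2) ((x - 1) ^ 2 / x) x := by
  have h1 := Real.hasDerivAt_log hx.ne'
  have h2 : HasDerivAt (fun y : ℝ => (y - 1) ^ 2 / 2) (x - 1) x := by
    have : HasDerivAt (fun y : ℝ => (y - 1) ^ 2) (2 * (x - 1) ^ 1) x := by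
      simpa using ((hasDerivAt_id x).sub_const 1).fun_pow 2
    simpa using this.div_const 2
  have h3 : HasDerivAt (fun y : ℝ => y - 1) 1 x := (hasDerivAt_id x).sub_const 1
  have := (h1.fun_sub h3).fun_add h2
  refine this.congr_deriv ?_
  field_simp
  ring

lemma hasDerivAt_g {x : ℝ} (hx : 0 < x) :
    HasDerivAt (fun y => (y - 1) ^ 2 * Real.log y -
      (Real.log y - (y - 1) + (y - 1) ^ 2 / 2)) (2 * (x - 1) * Real.log x) x := by
  have hsq : HasDerivAt (fun y : ℝ => (y - 1) ^ 2) (2 * (x - 1) ^ 1) x := by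
    simpa using ((hasDerivAt_id x).sub_const 1).fun_pow 2
  have h1 := hsq.fun_mul (Real.hasDerivAt_log hx.ne')
  have := h1.fun_sub (hasDerivAt_f hx)
  refine this.congr_deriv ?_
  field_simp
  ring

lemma f_mono : MonotoneOn (fun y => Real.log y - (y - 1) + (y - 1) ^ 2 / 2) (Set.Ioi 0) := by
  apply monotoneOn_of_deriv_nonneg (convex_Ioi 0)
  · intro x hx
    exact (hasDerivAt_f hx).continuousAt.continuousWithinAt
  · intro x hx
    rw [interior_Ioi] at hx
    exact (hasDerivAt_f hx).differentiableAt.differentiableWithinAt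
  · intro x hx
    rw [interior_Ioi] at hx
    rw [(hasDerivAt_f hx).deriv]
    have hx' : 0 < x := hx
    positivity

lemma g_mono : MonotoneOn (fun y => (y - 1) ^ 2 * Real.log y -
      (Real.log y - (y - 1) + (y - 1) ^ 2 / 2)) (Set.Ioi 0) := by
  apply monotoneOn_of_deriv_nonneg (convex_Ioi 0)
  · intro x hx
    exact (hasDerivAt_g hx).continuousAt.continuousWithinAt
  · intro x hx
    rw [interior_Ioi] at hx
    exact (hasDerivAt_g hx).differentiableAt.differentiableWithinAt
  · intro x hx
    rw [interior_Ioi] at hx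
    rw [(hasDerivAt_g hx).deriv]
    have hx' : 0 < x := hx
    rcases le_total 1 x with h | h
    · have := Real.log_nonneg h
      nlinarith
    · have := Real.log_nonpos (le_of_lt hx') h
      nlinarith

lemma key {r : ℝ} (hr : 0 < r) :
    |Real.log r - (r - 1) + (r - 1) ^ 2 / 2| ≤ (r - 1) ^ 2 * |Real.log r| := by
  have h1 : (1 : ℝ) ∈ Set.Ioi (0 : ℝ) := by norm_num
  have hrm : r ∈ Set.Ioi (0 : ℝ) := hr
  rw [abs_le]
  rcases le_total 1 r with h | h
  · have hf := f_mono h1 hrm h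
    have hg := g_mono h1 hrm h
    simp only [Real.log_one] at hf hg
    rw [abs_of_nonneg (Real.log_nonneg h)]
    constructor
    · nlinarith [sq_nonneg (r - 1), Real.log_nonneg h]
    · nlinarith
  · have hf := f_mono hrm h1 h
    have hg := g_mono hrm h1 h
    simp only [Real.log_one] at hf hg
    rw [abs_of_nonpos (Real.log_nonpos (le_of_lt hr) h)]
    constructor
    · nlinarith
    · nlinarith [sq_nonneg (r - 1), Real.log_nonpos (le_of_lt hr) h]

/-- Let `R` be a strictly positive real random variable with `E[R] = 1`,
`E[|log R|] < ∞`, `E[(R − 1)²] < ∞` and `E[(R − 1)² |log R|] < ∞`.  Then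
`|E[log R] + E[(R − 1)²]/2| ≤ E[(R − 1)² |log R|]`. -/
theorem abs_expectation_log_add_half_var_le
    {Ω : Type*} [MeasurableSpace Ω] (P : Measure Ω) [IsProbabilityMeasure P]
    (R : Ω → ℝ) (hRpos : ∀ ω, 0 < R ω)
    (hRint : Integrable R P) (hRmean : ∫ ω, R ω ∂P = 1)
    (hlogint : Integrable (fun ω => |Real.log (R ω)|) P)
    (hsqint : Integrable (fun ω => (R ω - 1) ^ 2) P)
    (hsqlogint : Integrable (fun ω => (R ω - 1) ^ 2 * |Real.log (R ω)|) P) :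
    |(∫ ω, Real.log (R ω) ∂P) + (∫ ω, (R ω - 1) ^ 2 ∂P) / 2|
      ≤ ∫ ω, (R ω - 1) ^ 2 * |Real.log (R ω)| ∂P := by
  have hmeas : AEStronglyMeasurable (fun ω => Real.log (R ω)) P :=
    (Real.measurable_log.comp_aemeasurable hRint.aemeasurable).aestronglyMeasurable
  have hlog : Integrable (fun ω => Real.log (R ω)) P := by
    refine (integrable_norm_iff hmeas).mp ?_
    simpa [Real.norm_eq_abs] using hlogint
  have hsub : Integrable (fun ω => R ω - 1) P := hRint.sub (integrable_const 1)
  have hf : Integrable (fun ω => Real.log (R ω) - (R ω - 1) + (R ω - 1) ^ 2 / 2) P :=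
    (hlog.sub hsub).add (hsqint.div_const 2)
  have hsubint : ∫ ω, (R ω - 1) ∂P = 0 := by
    rw [integral_sub hRint (integrable_const 1), hRmean]
    simp
  have hA : Integrable (fun ω => Real.log (R ω) - (R ω - 1)) P := hlog.sub hsub
  have hB : Integrable (fun ω => (R ω - 1) ^ 2 / 2) P := hsqint.div_const 2
  have heq : (∫ ω, Real.log (R ω) ∂P) + (∫ ω, (R ω - 1) ^ 2 ∂P) / 2
      = ∫ ω, (Real.log (R ω) - (R ω - 1) + (R ω - 1) ^ 2 / 2) ∂P := by
    rw [integral_add hA hB, integral_sub hlog hsub, hsubint, integral_div]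
    ring
  rw [heq]
  calc |∫ ω, (Real.log (R ω) - (R ω - 1) + (R ω - 1) ^ 2 / 2) ∂P|
      ≤ ∫ ω, |Real.log (R ω) - (R ω - 1) + (R ω - 1) ^ 2 / 2| ∂P := by
        exact
          norm_integral_le_integral_norm
            (fun ω => Real.log (R ω) - (R ω - 1) + (R ω - 1) ^ 2 / 2) (μ := P)
    _ ≤ ∫ ω, (R ω - 1) ^ 2 * |Real.log (R ω)| ∂P :=
        integral_mono hf.abs hsqlogint (fun ω => key (hRpos ω))
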